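/- arXiv:0907.2051 — 4 statements merged into one kernel-verified Lean document; each statement's English description precedes it below -/
import Mathlib

section
/- There is an absolute constant C such that for any nonempty finite subsets B₁, B₂ of F_p, there exist at most C · min{|B₁+B₂|/|B₂|, |B₁−B₂|/|B₂|} translates of B₂ whose union covers at least 99% of the elements of B₁ (i.e., a subset of B₁ of size at least 0.99|B₁|). -/
open Finset Pointwise
open scoped Combinatorics.Additive

variable {G : Type*} [AddCommGroup G] [DecidableEq G]

lemma myAddEnergy_neg_right (U B : Finset G) : E[U, -B] = E[U, B] := by
  unfold Finset.addEnergy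
  apply Finset.card_nbij' (i := fun x => (x.1, (-x.2.2, -x.2.1)))
    (j := fun x => (x.1, (-x.2.2, -x.2.1)))
  · rintro ⟨⟨a₁, a₂⟩, c₁, c₂⟩ hx
    simp only [Finset.mem_coe, mem_filter, mem_product, Finset.mem_neg'] at hx ⊢
    refine ⟨⟨hx.1.1, hx.1.2.2, hx.1.2.1⟩, ?_⟩
    simp only [← sub_eq_add_neg]
    rw [sub_eq_sub_iff_add_eq_add]
    exact hx.2
  · rintro ⟨⟨a₁, a₂⟩, b₁, b₂⟩ hx
    simp only [Finset.mem_coe, mem_filter, mem_product, Finset.mem_neg', neg_neg] at hx ⊢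
    refine ⟨⟨hx.1.1, hx.1.2.2, hx.1.2.1⟩, ?_⟩
    simp only [← sub_eq_add_neg]
    rw [sub_eq_sub_iff_add_eq_add]
    exact hx.2
  · rintro ⟨⟨a₁, a₂⟩, c₁, c₂⟩ _; simp
  · rintro ⟨⟨a₁, a₂⟩, b₁, b₂⟩ _; simp

lemma fiber_eq (U B : Finset G) (c : G) :
    ((U ×ˢ (-B)).filter fun p => p.1 + p.2 = c).card
      = ((U ×ˢ B).filter fun p => p.1 - p.2 = c).card := by
  apply Finset.card_nbij' (i := fun x => (x.1, -x.2)) (j := fun x => (x.1, -x.2))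
  · rintro ⟨a, b⟩ hx
    simp only [Finset.mem_coe, mem_filter, mem_product, Finset.mem_neg', neg_neg, sub_eq_add_neg] at hx ⊢
    exact ⟨⟨hx.1.1, hx.1.2⟩, hx.2⟩
  · rintro ⟨a, b⟩ hx
    simp only [Finset.mem_coe, mem_filter, mem_product, Finset.mem_neg', neg_neg, sub_eq_add_neg] at hx ⊢
    exact hx
  · rintro ⟨a, b⟩ _; simp
  · rintro ⟨a, b⟩ _; simp

lemma sum_sq_eq_energy (U B : Finset G) :
    ∑ c ∈ U - B, ((U ×ˢ B).filter fun p => p.1 - p.2 = c).card ^ 2 = E[U, B] := by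
  rw [← myAddEnergy_neg_right, Finset.addEnergy_eq_sum_sq', ← sub_eq_add_neg]
  exact Finset.sum_congr rfl fun c _ => by rw [fiber_eq]

lemma exists_good_translate (U B : Finset G) (hU : U.Nonempty) (hB : B.Nonempty) :
    ∃ t, U.card * B.card ≤ (U + B).card * (U ∩ B.image (t + ·)).card ∧
         U.card * B.card ≤ (U - B).card * (U ∩ B.image (t + ·)).card := by
  set ν : G → ℕ := fun c => ((U ×ˢ B).filter fun p => p.1 - p.2 = c).card with hν
  have hsum : ∑ c ∈ U - B, ν c = U.card * B.card := by
    rw [← Finset.card_product]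
    exact (Finset.card_eq_sum_card_fiberwise fun p hp => by
      rw [Finset.mem_coe, Finset.mem_product] at hp; exact Finset.sub_mem_sub hp.1 hp.2).symm
  obtain ⟨t, ht, hmax⟩ := Finset.exists_max_image (U - B) ν (hU.sub hB)
  have hsq : ∑ c ∈ U - B, ν c ^ 2 ≤ ν t * (U.card * B.card) := by
    rw [← hsum, Finset.mul_sum]
    exact Finset.sum_le_sum fun c hc => by
      rw [sq]; exact Nat.mul_le_mul_right _ (hmax c hc)
  have hνle : ν t ≤ (U ∩ B.image (t + ·)).card := by
    apply Finset.card_le_card_of_injOn (fun p => p.1)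
    · rintro ⟨a, b⟩ hp
      simp only [hν, Finset.mem_coe, mem_filter, mem_product] at hp
      simp only [Finset.mem_coe, Finset.mem_inter, Finset.mem_image]
      exact ⟨hp.1.1, b, hp.1.2, by rw [← hp.2]; abel⟩
    · rintro ⟨a, b⟩ hp ⟨a', b'⟩ hp' (h : a = a')
      simp only [hν, coe_filter, Set.mem_setOf_eq, Finset.mem_coe, mem_product] at hp hp'
      subst h
      have hb : b = b' := sub_right_injective (hp.2.trans hp'.2.symm)
      simp [hb]
  have hpos : 0 < U.card * B.card := Nat.mul_pos hU.card_pos hB.card_pos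
  have e2 : E[U, B] ≤ (U ∩ B.image (t + ·)).card * (U.card * B.card) := by
    rw [← sum_sq_eq_energy]
    exact hsq.trans (Nat.mul_le_mul_right _ hνle)
  refine ⟨t, ?_, ?_⟩
  · apply Nat.le_of_mul_le_mul_right _ hpos
    calc U.card * B.card * (U.card * B.card) = U.card ^ 2 * B.card ^ 2 := by ring
      _ ≤ (U + B).card * E[U, B] := Finset.le_card_add_mul_addEnergy U B
      _ ≤ (U + B).card * ((U ∩ B.image (t + ·)).card * (U.card * B.card)) :=
          Nat.mul_le_mul_left _ e2
      _ = (U + B).card * (U ∩ B.image (t + ·)).card * (U.card * B.card) := by ring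
  · apply Nat.le_of_mul_le_mul_right _ hpos
    have e1 := Finset.le_card_add_mul_addEnergy U (-B)
    rw [Finset.card_neg, ← sub_eq_add_neg, myAddEnergy_neg_right] at e1
    calc U.card * B.card * (U.card * B.card) = U.card ^ 2 * B.card ^ 2 := by ring
      _ ≤ (U - B).card * E[U, B] := e1
      _ ≤ (U - B).card * ((U ∩ B.image (t + ·)).card * (U.card * B.card)) :=
          Nat.mul_le_mul_left _ e2
      _ = (U - B).card * (U ∩ B.image (t + ·)).card * (U.card * B.card) := by ring

lemma greedy (B₁ B₂ : Finset G) (hB₂ : B₂.Nonempty) :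
    ∀ n (U : Finset G), U.card ≤ n → U ⊆ B₁ →
    ∃ T : Finset G,
      100 * (U \ T.biUnion (fun t => B₂.image (t + ·))).card ≤ B₁.card ∧
      T.card * (B₁.card * B₂.card) ≤
        100 * min (B₁ + B₂).card (B₁ - B₂).card *
          (U.card - (U \ T.biUnion (fun t => B₂.image (t + ·))).card) := by
  intro n
  induction n with
  | zero =>
    intro U hUn _
    refine ⟨∅, ?_, by simp⟩
    simp only [Finset.biUnion_empty, Finset.sdiff_empty]
    omega
  | succ n ih =>
    intro U hUn hUB
    by_cases hsmall : 100 * U.card ≤ B₁.card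
    · refine ⟨∅, ?_, by simp⟩
      simp only [Finset.biUnion_empty, Finset.sdiff_empty]
      exact hsmall
    · have hUne : U.Nonempty := Finset.card_pos.mp (by omega)
      obtain ⟨t, h1, h2⟩ := exists_good_translate U B₂ hUne hB₂
      have hM : U.card * B₂.card ≤
          min (B₁ + B₂).card (B₁ - B₂).card * (U ∩ B₂.image (t + ·)).card := by
        rcases le_total (B₁ + B₂).card (B₁ - B₂).card with hc | hc
        · rw [min_eq_left hc]
          exact h1.trans (Nat.mul_le_mul_right _
            (Finset.card_le_card (Finset.add_subset_add hUB Finset.Subset.rfl)))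
        · rw [min_eq_right hc]
          exact h2.trans (Nat.mul_le_mul_right _
            (Finset.card_le_card (Finset.sub_subset_sub hUB Finset.Subset.rfl)))
      have hpos : 0 < U.card * B₂.card :=
        Nat.mul_pos hUne.card_pos hB₂.card_pos
      have hrpos : 0 < (U ∩ B₂.image (t + ·)).card := by
        rcases Nat.eq_zero_or_pos (U ∩ B₂.image (t + ·)).card with h0 | h0
        · rw [h0, Nat.mul_zero] at hM; omega
        · exact h0
      have hcard' : (U \ B₂.image (t + ·)).card = U.card - (U ∩ B₂.image (t + ·)).card := by
        have := Finset.card_inter_add_card_sdiff U (B₂.image (t + ·))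
        omega
      have hrle : (U ∩ B₂.image (t + ·)).card ≤ U.card :=
        Finset.card_le_card Finset.inter_subset_left
      obtain ⟨T₁, hT1, hT2⟩ := ih (U \ B₂.image (t + ·)) (by omega)
        (Finset.Subset.trans Finset.sdiff_subset hUB)
      have hcov : U \ (insert t T₁).biUnion (fun s => B₂.image (s + ·))
          = (U \ B₂.image (t + ·)) \ T₁.biUnion (fun s => B₂.image (s + ·)) := by
        rw [Finset.biUnion_insert, ← Finset.sup_eq_union, ← sdiff_sdiff_left]
      refine ⟨insert t T₁, by rw [hcov]; exact hT1, ?_⟩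
      rw [hcov]
      have hwle : ((U \ B₂.image (t + ·)) \ T₁.biUnion (fun s => B₂.image (s + ·))).card
          ≤ (U \ B₂.image (t + ·)).card := Finset.card_le_card Finset.sdiff_subset
      have hstep : B₁.card * B₂.card ≤
          100 * (min (B₁ + B₂).card (B₁ - B₂).card * (U ∩ B₂.image (t + ·)).card) := by
        calc B₁.card * B₂.card ≤ 100 * U.card * B₂.card :=
              Nat.mul_le_mul_right _ (by omega)
          _ = 100 * (U.card * B₂.card) := by ring
          _ ≤ _ := Nat.mul_le_mul_left _ hM
      calc (insert t T₁).card * (B₁.card * B₂.card)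
          ≤ (T₁.card + 1) * (B₁.card * B₂.card) :=
            Nat.mul_le_mul_right _ (Finset.card_insert_le _ _)
        _ = T₁.card * (B₁.card * B₂.card) + B₁.card * B₂.card := by ring
        _ ≤ 100 * min (B₁ + B₂).card (B₁ - B₂).card *
              ((U \ B₂.image (t + ·)).card -
                ((U \ B₂.image (t + ·)) \ T₁.biUnion (fun s => B₂.image (s + ·))).card)
            + 100 * (min (B₁ + B₂).card (B₁ - B₂).card * (U ∩ B₂.image (t + ·)).card) :=
            Nat.add_le_add hT2 hstep
        _ = 100 * min (B₁ + B₂).card (B₁ - B₂).card *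
              (((U \ B₂.image (t + ·)).card -
                ((U \ B₂.image (t + ·)) \ T₁.biUnion (fun s => B₂.image (s + ·))).card)
               + (U ∩ B₂.image (t + ·)).card) := by ring
        _ = _ := by congr 1; omega

theorem cover_lemma :
    ∃ C : ℝ, 0 < C ∧ ∀ (p : ℕ), p.Prime → ∀ (B₁ B₂ : Finset (ZMod p)),
      B₁.Nonempty → B₂.Nonempty →
      ∃ T : Finset (ZMod p),
        (T.card : ℝ) ≤
          C * min (((B₁ + B₂).card : ℝ) / (B₂.card : ℝ)) (((B₁ - B₂).card : ℝ) / (B₂.card : ℝ)) ∧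
        ∃ S ⊆ B₁, (0.99 : ℝ) * (B₁.card : ℝ) ≤ (S.card : ℝ) ∧
          S ⊆ T.biUnion (fun t => B₂.image (t + ·)) := by
  refine ⟨100, by norm_num, ?_⟩
  intro p hp B₁ B₂ h₁ h₂
  obtain ⟨T, hT1, hT2⟩ := greedy B₁ B₂ h₂ B₁.card B₁ le_rfl Finset.Subset.rfl
  set W := B₁ \ T.biUnion (fun t => B₂.image (t + ·)) with hWdef
  have hb : (0 : ℝ) < (B₂.card : ℝ) := by exact_mod_cast h₂.card_pos
  have hWsub : W ⊆ B₁ := Finset.sdiff_subset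
  refine ⟨T, ?_, B₁ \ W, Finset.sdiff_subset, ?_, ?_⟩
  · -- cardinality bound on T
    have hnat : T.card * B₂.card ≤ 100 * min (B₁ + B₂).card (B₁ - B₂).card := by
      have h3 : (T.card * B₂.card) * B₁.card
          ≤ (100 * min (B₁ + B₂).card (B₁ - B₂).card) * B₁.card := by
        calc (T.card * B₂.card) * B₁.card = T.card * (B₁.card * B₂.card) := by ring
          _ ≤ 100 * min (B₁ + B₂).card (B₁ - B₂).card * (B₁.card - W.card) := hT2
          _ ≤ (100 * min (B₁ + B₂).card (B₁ - B₂).card) * B₁.card :=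
              Nat.mul_le_mul_left _ (Nat.sub_le _ _)
      exact Nat.le_of_mul_le_mul_right h3 h₁.card_pos
    have hmin : min (((B₁ + B₂).card : ℝ) / (B₂.card : ℝ)) (((B₁ - B₂).card : ℝ) / (B₂.card : ℝ))
        = ((min (B₁ + B₂).card (B₁ - B₂).card : ℕ) : ℝ) / (B₂.card : ℝ) := by
      rw [Nat.cast_min]
      rcases le_total ((B₁ + B₂).card : ℝ) ((B₁ - B₂).card : ℝ) with hc | hc
      · rw [min_eq_left (by gcongr), min_eq_left hc]
      · rw [min_eq_right (by gcongr), min_eq_right hc]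
    rw [hmin, mul_div_assoc', le_div_iff₀ hb]
    exact_mod_cast hnat
  · -- size of S
    have hcard : (B₁ \ W).card = B₁.card - W.card := Finset.card_sdiff_of_subset hWsub
    have hWB : W.card ≤ B₁.card := Finset.card_le_card hWsub
    have h100 : ((100 * W.card : ℕ) : ℝ) ≤ (B₁.card : ℝ) := by exact_mod_cast hT1
    rw [hcard, Nat.cast_sub hWB]
    push_cast at h100 ⊢
    linarith
  · rw [hWdef, Finset.sdiff_sdiff_self_left]
    exact Finset.inter_subset_right
end

section
/- For every k ≥ 1 and ε ∈ (0,1) there is a constant C_{k,ε} such that: for any nonempty finite subsets B₀, B₁, …, B_k of F_p, there exists X ⊆ B₀ with |X| ≥ (1−ε)|B₀| and |X + B₁ + B₂ + ⋯ + B_k| ≤ C_{k,ε} · (∏_{i=1}^k |B_i + B₀|/|B₀|) · |X|. -/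
set_option maxHeartbeats 4000000

open Finset Pointwise

section Helpers

variable {G : Type*} [AddCommGroup G] [DecidableEq G]
variable {H : Type*} [AddCommGroup H] [DecidableEq H]

/-- Sum of pointwise-subset finsets is a subset. -/
lemma ks_sum_subset {ι : Type*} (s : Finset ι) (f g : ι → Finset G)
    (h : ∀ i ∈ s, f i ⊆ g i) : ∑ i ∈ s, f i ⊆ ∑ i ∈ s, g i := by
  induction s using Finset.cons_induction with
  | empty => simp
  | cons a s ha ih =>
    rw [Finset.sum_cons, Finset.sum_cons]
    exact Finset.add_subset_add (h a (Finset.mem_cons_self _ _))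
      (ih fun i hi => h i (Finset.mem_cons.2 (Or.inr hi)))

/-- An elementwise sum of members is a member of the pointwise sum. -/
lemma ks_sum_mem_sum {ι : Type*} (s : Finset ι) (f : ι → Finset G) (x : ι → G)
    (hx : ∀ i ∈ s, x i ∈ f i) : (∑ i ∈ s, x i) ∈ ∑ i ∈ s, f i := by
  induction s using Finset.cons_induction with
  | empty => simp [Finset.mem_zero]
  | cons a s ha ih =>
    rw [Finset.sum_cons, Finset.sum_cons]
    exact Finset.add_mem_add (hx a (Finset.mem_cons_self _ _))
      (ih fun i hi => hx i (Finset.mem_cons.2 (Or.inr hi)))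

lemma ks_prod_add_prod (s₁ s₂ : Finset G) (t₁ t₂ : Finset H) :
    (s₁ ×ˢ t₁) + (s₂ ×ˢ t₂) = (s₁ + s₂) ×ˢ (t₁ + t₂) := by
  ext ⟨x, y⟩
  simp only [Finset.mem_add, Finset.mem_product, Prod.exists]
  constructor
  · rintro ⟨a, b, ⟨ha, hb⟩, c, d, ⟨hc, hd⟩, h⟩
    rw [Prod.mk_add_mk, Prod.mk.injEq] at h
    exact ⟨h.1 ▸ ⟨a, ha, c, hc, rfl⟩, h.2 ▸ ⟨b, hb, d, hd, rfl⟩⟩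
  · rintro ⟨⟨a, ha, c, hc, hx⟩, ⟨b, hb, d, hd, hy⟩⟩
    exact ⟨a, b, ⟨ha, hb⟩, c, d, ⟨hc, hd⟩, by rw [Prod.mk_add_mk, hx, hy]⟩

lemma ks_sum_product {ι : Type*} (s : Finset ι) (f : ι → Finset G) (g : ι → Finset H) :
    ∑ i ∈ s, (f i ×ˢ g i) = (∑ i ∈ s, f i) ×ˢ (∑ i ∈ s, g i) := by
  induction s using Finset.cons_induction with
  | empty =>
    ext ⟨x, y⟩
    simp [Finset.mem_zero, Prod.ext_iff]
  | cons a s ha ih =>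
    rw [Finset.sum_cons, Finset.sum_cons, Finset.sum_cons, ih, ks_prod_add_prod]

lemma ks_one_le_prod {ι : Type*} (s : Finset ι) (f : ι → ℝ) (h : ∀ i ∈ s, 1 ≤ f i) :
    1 ≤ ∏ i ∈ s, f i := by
  calc (1 : ℝ) = ∏ _i ∈ s, 1 := by rw [Finset.prod_const_one]
    _ ≤ ∏ i ∈ s, f i := Finset.prod_le_prod (by intros; norm_num) h

/-- Base-`N` digit uniqueness. -/
lemma ks_digits_inj : ∀ (k N : ℕ) (a b : Fin k → ℕ), (∀ i, a i < N) → (∀ i, b i < N) →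
    (∑ i, a i * N ^ (i : ℕ)) = (∑ i, b i * N ^ (i : ℕ)) → a = b := by
  intro k
  induction k with
  | zero =>
    intro N a b _ _ _
    funext i
    exact i.elim0
  | succ k ih =>
    intro N a b ha hb hsum
    have hN : 0 < N := lt_of_le_of_lt (Nat.zero_le _) (ha 0)
    have key : ∀ c : Fin (k + 1) → ℕ,
        (∑ i, c i * N ^ (i : ℕ)) = c 0 + (∑ i : Fin k, c i.succ * N ^ (i : ℕ)) * N := by
      intro c
      rw [Fin.sum_univ_succ, Finset.sum_mul]
      simp only [Fin.val_zero, pow_zero, mul_one, Fin.val_succ, pow_succ, mul_assoc]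
    rw [key a, key b] at hsum
    have h0 : a 0 = b 0 := by
      have := congrArg (· % N) hsum
      simpa [Nat.add_mul_mod_self_right, Nat.mod_eq_of_lt (ha 0), Nat.mod_eq_of_lt (hb 0)]
        using this
    have htail : (∑ i : Fin k, a i.succ * N ^ (i : ℕ)) = ∑ i : Fin k, b i.succ * N ^ (i : ℕ) := by
      rw [h0] at hsum
      have := Nat.add_left_cancel hsum
      exact Nat.eq_of_mul_eq_mul_right hN this
    have htl := ih N (fun i => a i.succ) (fun i => b i.succ)
      (fun i => ha i.succ) (fun i => hb i.succ) htail
    funext i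
    rcases Fin.eq_zero_or_eq_succ i with rfl | ⟨j, rfl⟩
    · exact h0
    · exact congrFun htl j

/-- Petridis-style iterated sumset bound with a minimizing subset. -/
lemma ks_petridis (A B : Finset G) (hA : A.Nonempty) :
    ∃ U ⊆ A, U.Nonempty ∧ ∀ n : ℕ,
      (U + ∑ _i ∈ Finset.range n, B).card * A.card ^ n ≤ (A + B).card ^ n * U.card := by
  classical
  have hA' : A ∈ A.powerset.erase ∅ :=
    Finset.mem_erase_of_ne_of_mem hA.ne_empty (Finset.mem_powerset_self _)
  obtain ⟨U, hU, hUmin⟩ := Finset.exists_min_image (A.powerset.erase ∅)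
    (fun V => ((V + B).card : ℚ≥0) / V.card) ⟨A, hA'⟩
  rw [Finset.mem_erase, Finset.mem_powerset, ← Finset.nonempty_iff_ne_empty] at hU
  obtain ⟨hUne, hUA⟩ := hU
  refine ⟨U, hUA, hUne, ?_⟩
  have hmin : ∀ V ∈ A.powerset.erase ∅, (U + B).card * V.card ≤ (V + B).card * U.card := by
    intro V hV
    have hVne : V.Nonempty := by
      rw [Finset.mem_erase, ← Finset.nonempty_iff_ne_empty] at hV
      exact hV.1
    have h := hUmin V hV
    rw [div_le_div_iff₀ (by exact_mod_cast hUne.card_pos) (by exact_mod_cast hVne.card_pos)] at h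
    exact_mod_cast h
  have hkey : ∀ U' ⊆ U, (U + B).card * U'.card ≤ (U' + B).card * U.card := by
    intro U' hU'
    rcases U'.eq_empty_or_nonempty with rfl | hne
    · simp
    · exact hmin U' (Finset.mem_erase_of_ne_of_mem hne.ne_empty
        (Finset.mem_powerset.2 (hU'.trans hUA)))
  have hUvsA : (U + B).card * A.card ≤ (A + B).card * U.card := hmin A hA'
  intro n
  induction n with
  | zero => simp
  | succ n ih =>
    set S := ∑ _i ∈ Finset.range n, B with hS
    have hrw : U + ∑ _i ∈ Finset.range (n + 1), B = U + B + S := by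
      rw [Finset.sum_range_succ, ← hS, add_comm S B, ← add_assoc]
    have hpet : (U + B + S).card * U.card ≤ (U + B).card * (U + S).card :=
      by have := Finset.pluennecke_petridis_inequality_add S hkey
         rwa [add_comm S U, add_right_comm U S B] at this
    refine Nat.le_of_mul_le_mul_right ?_ hUne.card_pos
    calc (U + ∑ _i ∈ Finset.range (n + 1), B).card * A.card ^ (n + 1) * U.card
        = ((U + B + S).card * U.card) * (A.card * A.card ^ n) := by rw [hrw]; ring
      _ ≤ ((U + B).card * (U + S).card) * (A.card * A.card ^ n) :=
          Nat.mul_le_mul_right _ hpet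
      _ = ((U + B).card * A.card) * ((U + S).card * A.card ^ n) := by ring
      _ ≤ ((A + B).card * U.card) * ((A + B).card ^ n * U.card) := Nat.mul_le_mul hUvsA ih
      _ = (A + B).card ^ (n + 1) * U.card * U.card := by ring

/-- Plünnecke–Ruzsa for different summands (with a constant loss `(2k)^k`). -/
lemma ks_different_summands (k : ℕ) (hk : 1 ≤ k) (A : Finset G) (hA : A.Nonempty)
    (B : Fin k → Finset G) (hB : ∀ i, (B i).Nonempty) :
    ∃ X ⊆ A, X.Nonempty ∧
      ((X + ∑ i, B i).card : ℝ) ≤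
        (2 * k) ^ k * (∏ i, ((A + B i).card : ℝ) / A.card) * X.card := by
  classical
  have ha : (0 : ℝ) < A.card := by exact_mod_cast hA.card_pos
  set κ : Fin k → ℝ := fun i => ((A + B i).card : ℝ) / A.card with hκdef
  have hκ1 : ∀ i, 1 ≤ κ i := by
    intro i
    rw [hκdef, le_div_iff₀ ha, one_mul]
    exact_mod_cast Finset.card_le_card_add_right (hB i)
  have hκpos : ∀ i, 0 < κ i := fun i => lt_of_lt_of_le one_pos (hκ1 i)
  set K : ℝ := ∏ i, κ i with hKdef
  have hK1 : 1 ≤ K := by rw [hKdef]; exact ks_one_le_prod _ _ fun i _ => hκ1 i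
  have hKpos : 0 < K := lt_of_lt_of_le one_pos hK1
  have hKκ : ∀ i, 1 ≤ K / κ i := by
    intro i
    rw [le_div_iff₀ (hκpos i), one_mul, hKdef]
    calc κ i = κ i * 1 := (mul_one _).symm
      _ ≤ κ i * ∏ j ∈ Finset.univ.erase i, κ j :=
          mul_le_mul_of_nonneg_left
            (ks_one_le_prod _ _ fun j _ => hκ1 j) (le_of_lt (hκpos i))
      _ = ∏ j, κ j := Finset.mul_prod_erase _ _ (Finset.mem_univ i)
  have hκK : ∀ i, κ i ≤ K := by
    intro i
    have := hKκ i
    rw [le_div_iff₀ (hκpos i), one_mul] at this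
    exact this
  set m : Fin k → ℕ := fun i => ⌈K / κ i⌉₊ with hmdef
  have hmge : ∀ i, K / κ i ≤ (m i : ℝ) := fun i => Nat.le_ceil _
  have hmle : ∀ i, (m i : ℝ) ≤ K / κ i + 1 := fun i =>
    le_of_lt (Nat.ceil_lt_add_one (le_of_lt (lt_of_lt_of_le one_pos (hKκ i))))
  have hm1 : ∀ i, 1 ≤ m i := fun i =>
    Nat.one_le_ceil_iff.2 (lt_of_lt_of_le one_pos (hKκ i))
  set N : ℕ := Finset.univ.sup m + 2 with hNdef
  have hmN : ∀ i, m i + 1 < N := by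
    intro i
    have : m i ≤ Finset.univ.sup m := Finset.le_sup (Finset.mem_univ i)
    omega
  have hN2 : 2 ≤ N := by omega
  -- the auxiliary finsets in ℤ
  set J : Fin k → Finset ℤ :=
    fun i => (Finset.range (m i)).image (fun t => ((1 + t : ℕ) : ℤ) * (N : ℤ) ^ (i : ℕ))
    with hJdef
  -- lower bound on the cardinality of ∑ J i
  have hJcard : (∏ i, m i) ≤ (∑ i, J i).card := by
    have hcard : (Fintype.piFinset fun i => Finset.range (m i)).card = ∏ i, m i := by
      simp [Fintype.card_piFinset]
    rw [← hcard]
    apply Finset.card_le_card_of_injOn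
      (fun a : Fin k → ℕ => ∑ i : Fin k, ((1 + a i : ℕ) : ℤ) * (N : ℤ) ^ (i : ℕ))
    · intro a ha'
      apply ks_sum_mem_sum
      intro i _
      simp only [hJdef, Finset.mem_image]
      refine ⟨a i, ?_, rfl⟩
      simp only [Finset.mem_coe, Fintype.mem_piFinset] at ha'
      simpa using ha' i
    · intro a ha' b hb' hab
      simp only [Finset.mem_coe, Fintype.mem_piFinset, Finset.mem_range] at ha' hb'
      have hcast : ((∑ i, (1 + a i) * N ^ (i : ℕ) : ℕ) : ℤ)
          = ((∑ i, (1 + b i) * N ^ (i : ℕ) : ℕ) : ℤ) := by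
        push_cast
        exact hab
      have hnat := Nat.cast_injective (R := ℤ) hcast
      have hda : ∀ i, 1 + a i < N := by
        intro i
        have h1 := hmN i
        have h2 := ha' i
        exact lt_of_lt_of_le (Nat.add_lt_add_left h2 1) (by rw [Nat.add_comm]; exact Nat.le_of_lt h1)
      have hdb : ∀ i, 1 + b i < N := by
        intro i
        have h1 := hmN i
        have h2 := hb' i
        exact lt_of_lt_of_le (Nat.add_lt_add_left h2 1) (by rw [Nat.add_comm]; exact Nat.le_of_lt h1)
      have hdig := ks_digits_inj k N (fun i => 1 + a i) (fun i => 1 + b i) hda hdb hnat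
      funext i
      have h : 1 + a i = 1 + b i := congrFun hdig i
      exact Nat.add_left_cancel h
  -- tensor construction
  set A' : Finset (G × ℤ) := A ×ˢ ({0} : Finset ℤ) with hA'def
  set B' : Fin k → Finset (G × ℤ) := fun i => (B i) ×ˢ (J i) with hB'def
  set Bb : Finset (G × ℤ) := Finset.univ.biUnion B' with hBbdef
  have hA'ne : A'.Nonempty := hA.product ⟨0, Finset.mem_singleton_self _⟩
  obtain ⟨U, hUA', hUne, hUn⟩ := ks_petridis A' Bb hA'ne
  set X : Finset G := U.image Prod.fst with hXdef
  have hXne : X.Nonempty := hUne.image _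
  have hUX : U = X ×ˢ ({0} : Finset ℤ) := by
    apply Finset.Subset.antisymm
    · intro u hu
      have hu' := hUA' hu
      rw [hA'def, Finset.mem_product] at hu'
      rw [Finset.mem_product]
      exact ⟨Finset.mem_image_of_mem _ hu, hu'.2⟩
    · rintro ⟨x, z⟩ hxz
      rw [Finset.mem_product] at hxz
      obtain ⟨⟨u1, u2⟩, hu, hux⟩ := Finset.mem_image.1 hxz.1
      have hz : z = 0 := Finset.mem_singleton.1 hxz.2
      have hu2 : u2 = 0 := by
        have hu' := hUA' hu
        rw [hA'def, Finset.mem_product] at hu'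
        exact Finset.mem_singleton.1 hu'.2
      have heq : (x, z) = (u1, u2) := by
        simp only [Prod.mk.injEq]
        exact ⟨hux.symm, by rw [hz, hu2]⟩
      rw [heq]
      exact hu
  have hUcard : U.card = X.card := by
    rw [hUX, Finset.card_product, Finset.card_singleton, mul_one]
  have hXA : X ⊆ A := by
    intro x hx
    obtain ⟨u, hu, hux⟩ := Finset.mem_image.1 hx
    have hu' := hUA' hu
    rw [hA'def, Finset.mem_product] at hu'
    exact hux ▸ hu'.1
  have hzero : ({0} : Finset ℤ) = (0 : Finset ℤ) := rfl
  -- key identity: U + ∑ B' i = (X + ∑ B i) ×ˢ (∑ J i)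
  have hkeyid : U + ∑ i, B' i = (X + ∑ i, B i) ×ˢ (∑ i, J i) := by
    rw [hUX, hB'def]
    rw [ks_sum_product Finset.univ B J, ks_prod_add_prod, hzero, zero_add]
  -- subset into the k-fold sum of Bb
  have hsub : U + ∑ i, B' i ⊆ U + ∑ _i ∈ Finset.range k, Bb := by
    apply Finset.add_subset_add_left
    rw [← Fin.sum_univ_eq_sum_range (fun _ => Bb) k]
    exact ks_sum_subset _ _ _ fun i _ => Finset.subset_biUnion_of_mem B' (Finset.mem_univ i)
  -- upper bound on (A' + Bb).card
  have hABb : (A' + Bb).card ≤ ∑ i, (A + B i).card * m i := by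
    have hsub2 : A' + Bb ⊆ Finset.univ.biUnion (fun i => A' + B' i) := by
      intro x hx
      obtain ⟨a, ha', b, hb', rfl⟩ := Finset.mem_add.1 hx
      obtain ⟨i, _, hbi⟩ := Finset.mem_biUnion.1 hb'
      exact Finset.mem_biUnion.2 ⟨i, Finset.mem_univ i, Finset.add_mem_add ha' hbi⟩
    calc (A' + Bb).card ≤ (Finset.univ.biUnion (fun i => A' + B' i)).card :=
          Finset.card_le_card hsub2
      _ ≤ ∑ i, (A' + B' i).card := Finset.card_biUnion_le
      _ ≤ ∑ i, (A + B i).card * m i := by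
          apply Finset.sum_le_sum
          intro i _
          have : A' + B' i = (A + B i) ×ˢ (({0} : Finset ℤ) + J i) := by
            rw [hA'def, hB'def, ks_prod_add_prod]
          rw [this, Finset.card_product]
          apply Nat.mul_le_mul_left
          rw [hzero, zero_add, hJdef]
          exact le_trans Finset.card_image_le (by simp)
  have hA'card : A'.card = A.card := by
    rw [hA'def, Finset.card_product, Finset.card_singleton, mul_one]
  -- assemble the natural-number inequality
  have hP := hUn k
  have hnat : (X + ∑ i, B i).card * (∑ i, J i).card * A.card ^ k
      ≤ (∑ i, (A + B i).card * m i) ^ k * X.card := by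
    calc (X + ∑ i, B i).card * (∑ i, J i).card * A.card ^ k
        = (U + ∑ i, B' i).card * A'.card ^ k := by
          rw [hkeyid, Finset.card_product, hA'card]
      _ ≤ (U + ∑ _i ∈ Finset.range k, Bb).card * A'.card ^ k := by
          exact Nat.mul_le_mul_right _ (Finset.card_le_card hsub)
      _ ≤ (A' + Bb).card ^ k * U.card := hP
      _ ≤ (∑ i, (A + B i).card * m i) ^ k * X.card := by
          rw [hUcard]
          exact Nat.mul_le_mul_right _ (Nat.pow_le_pow_left hABb k)
  -- move to the reals
  refine ⟨X, hXA, hXne, ?_⟩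
  have hJR : (∏ i, (m i : ℝ)) ≤ ((∑ i, J i).card : ℝ) := by exact_mod_cast hJcard
  have hcards : ∀ i : Fin k, ((A + B i).card : ℝ) = κ i * A.card := by
    intro i
    rw [hκdef]
    exact (div_mul_cancel₀ _ (ne_of_gt ha)).symm
  clear hUn hP hUX hkeyid hsub hABb hJcard hUcard hUA' hUne
  clear hJdef hNdef hmdef hA'def hB'def hBbdef hXdef hzero
  clear_value X Bb B' A' J N m K κ
  have hmain : ((X + ∑ i, B i).card : ℝ) * (∏ i, (m i : ℝ)) * (A.card : ℝ) ^ k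
      ≤ (∑ i, ((A + B i).card : ℝ) * m i) ^ k * X.card := by
    calc ((X + ∑ i, B i).card : ℝ) * (∏ i, (m i : ℝ)) * (A.card : ℝ) ^ k
        ≤ ((X + ∑ i, B i).card : ℝ) * ((∑ i, J i).card : ℝ) * (A.card : ℝ) ^ k :=
          mul_le_mul_of_nonneg_right
            (mul_le_mul_of_nonneg_left hJR (by clear hκdef; positivity)) (by clear hκdef; positivity)
      _ ≤ (∑ i, ((A + B i).card : ℝ) * m i) ^ k * X.card := by exact_mod_cast hnat
  -- numeric estimates
  have hsumle : (∑ i, ((A + B i).card : ℝ) * m i) ≤ 2 * k * K * A.card := by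
    have hterm : ∀ i : Fin k, ((A + B i).card : ℝ) * m i ≤ 2 * K * A.card := by
      intro i
      rw [hcards i]
      calc κ i * A.card * m i ≤ κ i * A.card * (K / κ i + 1) :=
            mul_le_mul_of_nonneg_left (hmle i)
              (mul_nonneg (le_of_lt (hκpos i)) (le_of_lt ha))
        _ = (K / κ i * κ i + κ i) * A.card := by ring
        _ = (K + κ i) * A.card := by
            rw [div_mul_cancel₀ _ (ne_of_gt (hκpos i))]
        _ ≤ (K + K) * A.card := by clear hκdef; gcongr; exact hκK i
        _ = 2 * K * A.card := by ring
    calc (∑ i, ((A + B i).card : ℝ) * m i) ≤ ∑ _i : Fin k, 2 * K * A.card :=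
          Finset.sum_le_sum fun i _ => hterm i
      _ = k * (2 * K * A.card) := by
          rw [Finset.sum_const, Finset.card_univ, Fintype.card_fin, nsmul_eq_mul]
      _ = 2 * k * K * A.card := by ring
  have hprodge : K ^ (k - 1) ≤ ∏ i, (m i : ℝ) := by
    have h1 : (∏ i, (K / κ i)) ≤ ∏ i, (m i : ℝ) :=
      Finset.prod_le_prod (fun i _ => le_of_lt (div_pos hKpos (hκpos i))) (fun i _ => hmge i)
    have h2 : (∏ i, (K / κ i)) = K ^ (k - 1) := by
      rw [Finset.prod_div_distrib, Finset.prod_const, Finset.card_univ, Fintype.card_fin,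
        ← hKdef]
      rw [eq_comm, eq_div_iff (ne_of_gt hKpos), ← pow_succ, Nat.sub_add_cancel hk]
    rw [← h2]
    exact h1
  have hprodpos : 0 < ∏ i, (m i : ℝ) := by
    apply Finset.prod_pos
    intro i _
    exact_mod_cast hm1 i
  have hapow : (0 : ℝ) < (A.card : ℝ) ^ k := by clear hκdef; positivity
  have hfinal : ((X + ∑ i, B i).card : ℝ) * ((∏ i, (m i : ℝ)) * (A.card : ℝ) ^ k)
      ≤ ((2 * k) ^ k * K * X.card) * ((∏ i, (m i : ℝ)) * (A.card : ℝ) ^ k) := by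
    calc ((X + ∑ i, B i).card : ℝ) * ((∏ i, (m i : ℝ)) * (A.card : ℝ) ^ k)
        = ((X + ∑ i, B i).card : ℝ) * (∏ i, (m i : ℝ)) * (A.card : ℝ) ^ k := by ring
      _ ≤ (∑ i, ((A + B i).card : ℝ) * m i) ^ k * X.card := hmain
      _ ≤ (2 * k * K * A.card) ^ k * X.card := by
          clear hκdef
          gcongr
      _ = ((2 * k) ^ k * K * X.card) * (K ^ (k - 1) * (A.card : ℝ) ^ k) := by
          rw [mul_pow, mul_pow]
          have : K ^ k = K * K ^ (k - 1) := by
            rw [← pow_succ', Nat.sub_add_cancel hk]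
          rw [this]
          ring
      _ ≤ ((2 * k) ^ k * K * X.card) * ((∏ i, (m i : ℝ)) * (A.card : ℝ) ^ k) := by
          clear hκdef
          gcongr
  have hle := le_of_mul_le_mul_right hfinal (mul_pos hprodpos hapow)
  exact hle

end Helpers

theorem plunnecke_ruzsa_refined (k : ℕ) (hk : 1 ≤ k) (ε : ℝ) (hε0 : 0 < ε) (hε1 : ε < 1) :
    ∃ C : ℝ, 0 < C ∧ ∀ (p : ℕ), p.Prime →
      ∀ (B₀ : Finset (ZMod p)) (B : Fin k → Finset (ZMod p)),
        B₀.Nonempty → (∀ i, (B i).Nonempty) →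
        ∃ X ⊆ B₀, (1 - ε) * (B₀.card : ℝ) ≤ (X.card : ℝ) ∧
          (((X + ∑ i, B i).card : ℝ)) ≤
            C * (∏ i, (((B i + B₀).card : ℝ) / (B₀.card : ℝ))) * (X.card : ℝ) := by
  refine ⟨(2 * k) ^ k / ε ^ k, by positivity, ?_⟩
  intro p hp B₀ B hB₀ hB
  haveI : Fact p.Prime := ⟨hp⟩
  set C : ℝ := (2 * k) ^ k / ε ^ k with hCdef
  set K : ℝ := ∏ i, (((B i + B₀).card : ℝ) / (B₀.card : ℝ)) with hKdef
  have hb₀ : (0 : ℝ) < B₀.card := by exact_mod_cast hB₀.card_pos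
  -- Katz–Shen iteration, by strong induction on the cardinality of the remaining set.
  have main : ∀ n : ℕ, ∀ A' : Finset (ZMod p), A'.card ≤ n → A' ⊆ B₀ →
      ∃ X ⊆ A', ((A'.card : ℝ) - ε * B₀.card ≤ X.card) ∧
        ((X + ∑ i, B i).card : ℝ) ≤ C * K * X.card := by
    intro n
    induction n with
    | zero =>
      intro A' hcard hsub
      refine ⟨∅, Finset.empty_subset _, ?_, ?_⟩
      · have : A' = ∅ := Finset.card_eq_zero.1 (Nat.le_zero.1 hcard)
        rw [this]
        simp
        positivity
      · rw [Finset.empty_add]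
        simp
    | succ n ih =>
      intro A' hcard hsub
      by_cases hsmall : (A'.card : ℝ) ≤ ε * B₀.card
      · refine ⟨∅, Finset.empty_subset _, by simpa using hsmall, ?_⟩
        rw [Finset.empty_add]
        simp
      push_neg at hsmall
      have hA'pos : (0 : ℝ) < A'.card := lt_trans (by positivity) hsmall
      have hA'ne : A'.Nonempty := Finset.card_pos.1 (by exact_mod_cast hA'pos)
      obtain ⟨X₀, hX₀A, hX₀ne, hX₀bound⟩ := ks_different_summands k hk A' hA'ne B hB
      -- bound the ratios with respect to A' by those with respect to B₀
      have hratio : (∏ i, ((A' + B i).card : ℝ) / A'.card) ≤ K / ε ^ k := by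
        have hterm : ∀ i : Fin k, ((A' + B i).card : ℝ) / A'.card
            ≤ (1 / ε) * (((B i + B₀).card : ℝ) / B₀.card) := by
          intro i
          have hnum : ((A' + B i).card : ℝ) ≤ ((B i + B₀).card : ℝ) := by
            have : A' + B i ⊆ B i + B₀ := by
              rw [add_comm (B i) B₀]
              exact Finset.add_subset_add_right hsub
            exact_mod_cast Finset.card_le_card this
          rw [div_le_iff₀ hA'pos]
          calc ((A' + B i).card : ℝ) ≤ ((B i + B₀).card : ℝ) := hnum
            _ = (1 / ε) * (((B i + B₀).card : ℝ) / B₀.card) * (ε * B₀.card) := by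
                field_simp
            _ ≤ (1 / ε) * (((B i + B₀).card : ℝ) / B₀.card) * A'.card := by
                gcongr
        calc (∏ i, ((A' + B i).card : ℝ) / A'.card)
            ≤ ∏ i, (1 / ε) * (((B i + B₀).card : ℝ) / B₀.card) :=
              Finset.prod_le_prod (fun i _ => by positivity) (fun i _ => hterm i)
          _ = (1 / ε) ^ k * K := by
              rw [Finset.prod_mul_distrib, Finset.prod_const, Finset.card_univ,
                Fintype.card_fin, hKdef]
          _ = K / ε ^ k := by
              rw [div_pow, one_pow]
              ring
      have hX₀bound' : ((X₀ + ∑ i, B i).card : ℝ) ≤ C * K * X₀.card := by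
        calc ((X₀ + ∑ i, B i).card : ℝ)
            ≤ (2 * k) ^ k * (∏ i, ((A' + B i).card : ℝ) / A'.card) * X₀.card := hX₀bound
          _ ≤ (2 * k) ^ k * (K / ε ^ k) * X₀.card := by
              gcongr
          _ = C * K * X₀.card := by
              rw [hCdef]
              ring
      -- recurse on A' \ X₀
      have hcard' : (A' \ X₀).card ≤ n := by
        have h1 : (A' \ X₀).card = A'.card - X₀.card := Finset.card_sdiff_of_subset hX₀A
        have h2 : 0 < X₀.card := hX₀ne.card_pos
        have h3 : X₀.card ≤ A'.card := Finset.card_le_card hX₀A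
        omega
      obtain ⟨X₁, hX₁sub, hX₁large, hX₁bound⟩ := ih (A' \ X₀) hcard'
        ((Finset.sdiff_subset).trans hsub)
      have hdisj : Disjoint X₀ X₁ :=
        Finset.disjoint_left.2 fun x hx₀ hx₁ =>
          (Finset.mem_sdiff.1 (hX₁sub hx₁)).2 hx₀
      refine ⟨X₀ ∪ X₁, Finset.union_subset hX₀A (hX₁sub.trans Finset.sdiff_subset), ?_, ?_⟩
      · have hcardu : ((X₀ ∪ X₁).card : ℝ) = X₀.card + X₁.card := by
          rw [Finset.card_union_of_disjoint hdisj]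
          push_cast
          ring
        have hsdcard : ((A' \ X₀).card : ℝ) = A'.card - X₀.card := by
          rw [Finset.card_sdiff_of_subset hX₀A]
          have : X₀.card ≤ A'.card := Finset.card_le_card hX₀A
          push_cast [this]
          ring
        rw [hcardu]
        rw [hsdcard] at hX₁large
        linarith
      · have hsplit : (X₀ ∪ X₁) + ∑ i, B i = (X₀ + ∑ i, B i) ∪ (X₁ + ∑ i, B i) :=
          Finset.union_add
        have hcardle : ((X₀ ∪ X₁ + ∑ i, B i).card : ℝ)
            ≤ ((X₀ + ∑ i, B i).card : ℝ) + ((X₁ + ∑ i, B i).card : ℝ) := by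
          rw [hsplit]
          exact_mod_cast Finset.card_union_le _ _
        have hcardu : ((X₀ ∪ X₁).card : ℝ) = X₀.card + X₁.card := by
          rw [Finset.card_union_of_disjoint hdisj]
          push_cast
          ring
        rw [hcardu]
        calc ((X₀ ∪ X₁ + ∑ i, B i).card : ℝ)
            ≤ ((X₀ + ∑ i, B i).card : ℝ) + ((X₁ + ∑ i, B i).card : ℝ) := hcardle
          _ ≤ C * K * X₀.card + C * K * X₁.card := add_le_add hX₀bound' hX₁bound
          _ = C * K * ((X₀.card : ℝ) + X₁.card) := by ring
  obtain ⟨X, hXsub, hXlarge, hXbound⟩ := main B₀.card B₀ le_rfl (Finset.Subset.refl _)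
  refine ⟨X, hXsub, ?_, ?_⟩
  · calc (1 - ε) * (B₀.card : ℝ) = (B₀.card : ℝ) - ε * B₀.card := by ring
      _ ≤ X.card := hXlarge
  · exact hXbound
end

section
/- Let A₁ ⊆ F_p be a finite set with at least two elements such that (A₁−A₁)/(A₁−A₁) ≠ F_p (the set of ratios (a−b)/(c−d) with a,b,c,d ∈ A₁, c ≠ d, is not all of F_p). Then |A₁| ≤ C·p^{1/2} for an absolute constant C. -/
open Finset Pointwise

/-- The set of ratios `(a - b) / (c - d)` with `a, b, c, d ∈ A` and `c ≠ d`. -/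
def ratioSet {p : ℕ} [Fact p.Prime] (A : Finset (ZMod p)) : Set (ZMod p) :=
  {x | ∃ a ∈ A, ∃ b ∈ A, ∃ c ∈ A, ∃ d ∈ A, c ≠ d ∧ x = (a - b) / (c - d)}

theorem small_if_ratio_ne_univ :
    ∃ C : ℝ, 0 < C ∧ ∀ (p : ℕ) [Fact p.Prime], ∀ A₁ : Finset (ZMod p),
      2 ≤ A₁.card → ratioSet A₁ ≠ Set.univ → (A₁.card : ℝ) ≤ C * Real.sqrt p := by
  refine ⟨1, one_pos, fun p _ A₁ _ hne => ?_⟩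
  obtain ⟨r, hr⟩ : ∃ r : ZMod p, r ∉ ratioSet A₁ := by
    by_contra h
    push_neg at h
    exact hne (Set.eq_univ_of_forall h)
  -- the map (a,b) ↦ a + r*b is injective on A₁ × A₁
  have hinj : Set.InjOn (fun q : ZMod p × ZMod p => q.1 + r * q.2) (↑(A₁ ×ˢ A₁) : Set (ZMod p × ZMod p)) := by
    rintro ⟨a, b⟩ hab ⟨a', b'⟩ hab' h
    simp only [Finset.mem_coe, Finset.mem_product] at hab hab'
    simp only at h
    have hbb' : b = b' := by
      by_contra hbb
      apply hr
      refine ⟨a', hab'.1, a, hab.1, b, hab.2, b', hab'.2, hbb, ?_⟩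
      have hsub : (b - b') ≠ 0 := sub_ne_zero.mpr hbb
      field_simp
      linear_combination h
    subst hbb'
    have : a = a' := by linear_combination h
    simp [this]
  have hcard : A₁.card * A₁.card ≤ p := by
    have := Finset.card_le_card_of_injOn (fun q : ZMod p × ZMod p => q.1 + r * q.2)
      (fun q _ => Finset.mem_univ _) hinj
    simpa [ZMod.card] using this
  have hp : (0:ℝ) ≤ p := Nat.cast_nonneg _
  rw [one_mul, show ((A₁.card:ℝ)) = Real.sqrt ((A₁.card:ℝ)^2) from (Real.sqrt_sq (by positivity)).symm]
  apply Real.sqrt_le_sqrt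
  have : ((A₁.card * A₁.card : ℕ) : ℝ) ≤ (p : ℝ) := Nat.cast_le.mpr hcard
  push_cast at this
  nlinarith [this]
end

section
/- For any finite nonempty set A₁ ⊆ F_p with |A₁| ≥ 2, there exists ξ ∈ F_p \ {0} such that the additive energy satisfies E^+(A₁, ξA₁) ≤ |A₁|² + |A₁|⁴/(p−1). -/
open Finset Pointwise

/-- Additive energy of `Y` and `Z`. -/
def paperAddEnergy {p : ℕ} (Y Z : Finset (ZMod p)) : ℕ :=
  ∑ x ∈ Y, ∑ y ∈ Y, ((Z.image (x + ·)) ∩ (Z.image (y + ·))).card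

lemma inter_card_eq {p : ℕ} [Fact (Nat.Prime p)] (A : Finset (ZMod p)) {ξ : ZMod p}
    (hξ : ξ ≠ 0) (x y : ZMod p) :
    (((A.image (ξ * ·)).image (x + ·)) ∩ ((A.image (ξ * ·)).image (y + ·))).card
      = ((A ×ˢ A).filter (fun q => x + ξ * q.1 = y + ξ * q.2)).card := by
  symm
  apply Finset.card_bij (fun q _ => x + ξ * q.1)
  · intro q hq
    simp only [Finset.mem_filter, Finset.mem_product] at hq
    simp only [Finset.mem_inter, Finset.mem_image]
    exact ⟨⟨ξ * q.1, ⟨q.1, hq.1.1, rfl⟩, rfl⟩, ⟨ξ * q.2, ⟨q.2, hq.1.2, rfl⟩, hq.2.symm⟩⟩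
  · intro q hq q' hq' h
    simp only [Finset.mem_filter, Finset.mem_product] at hq hq'
    have h1 : q.1 = q'.1 := mul_left_cancel₀ hξ (add_left_cancel h)
    have h2 : q.2 = q'.2 := by
      have := hq.2.symm.trans (h.trans hq'.2)
      exact mul_left_cancel₀ hξ (add_left_cancel this)
    exact Prod.ext h1 h2
  · intro w hw
    simp only [Finset.mem_inter, Finset.mem_image] at hw
    obtain ⟨⟨z₁, ⟨a, ha, rfl⟩, hz1⟩, ⟨z₂, ⟨b, hb, rfl⟩, hz2⟩⟩ := hw
    refine ⟨(a, b), ?_, hz1⟩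
    simp only [Finset.mem_filter, Finset.mem_product]
    exact ⟨⟨ha, hb⟩, hz1.trans hz2.symm⟩

lemma energy_eq {p : ℕ} [Fact (Nat.Prime p)] (A : Finset (ZMod p)) {ξ : ZMod p}
    (hξ : ξ ≠ 0) :
    paperAddEnergy A (A.image (ξ * ·)) =
      (((A ×ˢ A) ×ˢ (A ×ˢ A)).filter
        (fun t => t.1.1 + ξ * t.2.1 = t.1.2 + ξ * t.2.2)).card := by
  unfold paperAddEnergy
  simp_rw [inter_card_eq A hξ]
  rw [Finset.card_filter, Finset.sum_product]
  simp_rw [Finset.card_filter, Finset.sum_product]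

lemma diag_card {p : ℕ} (A : Finset (ZMod p)) :
    ((A ×ˢ A).filter (fun s : ZMod p × ZMod p => s.1 = s.2)).card = A.card := by
  apply Finset.card_bij (fun (s : ZMod p × ZMod p) _ => s.1)
  · intro s hs
    simp only [Finset.mem_filter, Finset.mem_product] at hs
    exact hs.1.1
  · intro s hs s' hs' h
    simp only [Finset.mem_filter, Finset.mem_product] at hs hs'
    exact Prod.ext h (by rw [← hs.2, ← hs'.2]; exact h)
  · intro a ha
    refine ⟨(a, a), ?_, rfl⟩
    simp [ha]

theorem exists_good_dilate (p : ℕ) (hp : p.Prime) (A₁ : Finset (ZMod p))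
    (h2 : 2 ≤ A₁.card) :
    ∃ ξ : ZMod p, ξ ≠ 0 ∧
      (paperAddEnergy A₁ (A₁.image (ξ * ·)) : ℝ) ≤
        (A₁.card : ℝ) ^ 2 + (A₁.card : ℝ) ^ 4 / ((p : ℝ) - 1) := by
  haveI : Fact p.Prime := ⟨hp⟩
  set R : Finset (ZMod p) := Finset.univ.erase 0 with hR
  have hRcard : R.card = p - 1 := by
    rw [hR, Finset.card_erase_of_mem (Finset.mem_univ _), Finset.card_univ, ZMod.card]
  have hRne : R.Nonempty := by
    rw [← Finset.card_pos, hRcard]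
    have := hp.two_le
    omega
  set T := ((A₁ ×ˢ A₁) ×ˢ (A₁ ×ˢ A₁)) with hT
  have key : ∑ ξ ∈ R, paperAddEnergy A₁ (A₁.image (ξ * ·))
      ≤ (p - 1) * A₁.card ^ 2 + A₁.card ^ 4 := by
    have h1 : ∀ ξ ∈ R, paperAddEnergy A₁ (A₁.image (ξ * ·)) =
        (T.filter (fun t => t.1.1 + ξ * t.2.1 = t.1.2 + ξ * t.2.2)).card := by
      intro ξ hξ
      exact energy_eq A₁ (Finset.ne_of_mem_erase hξ)
    rw [Finset.sum_congr rfl h1]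
    have h2 : ∑ ξ ∈ R, (T.filter (fun t => t.1.1 + ξ * t.2.1 = t.1.2 + ξ * t.2.2)).card
        = ∑ t ∈ T, (R.filter (fun ξ => t.1.1 + ξ * t.2.1 = t.1.2 + ξ * t.2.2)).card := by
      simp_rw [Finset.card_filter]
      exact Finset.sum_comm
    rw [h2]
    have hsplit := Finset.sum_filter_add_sum_filter_not T
      (fun t : (ZMod p × ZMod p) × (ZMod p × ZMod p) => t.1.1 = t.1.2 ∧ t.2.1 = t.2.2)
      (fun t => (R.filter (fun ξ => t.1.1 + ξ * t.2.1 = t.1.2 + ξ * t.2.2)).card)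
    rw [← hsplit]
    have hb1 : ∑ t ∈ T.filter (fun t => t.1.1 = t.1.2 ∧ t.2.1 = t.2.2),
        (R.filter (fun ξ => t.1.1 + ξ * t.2.1 = t.1.2 + ξ * t.2.2)).card
        ≤ (p - 1) * A₁.card ^ 2 := by
      calc ∑ t ∈ T.filter (fun t => t.1.1 = t.1.2 ∧ t.2.1 = t.2.2),
            (R.filter (fun ξ => t.1.1 + ξ * t.2.1 = t.1.2 + ξ * t.2.2)).card
          ≤ ∑ _t ∈ T.filter (fun t => t.1.1 = t.1.2 ∧ t.2.1 = t.2.2), (p - 1) := by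
            apply Finset.sum_le_sum
            intro t _
            rw [← hRcard]
            exact Finset.card_filter_le _ _
        _ = (T.filter (fun t => t.1.1 = t.1.2 ∧ t.2.1 = t.2.2)).card * (p - 1) := by
            rw [Finset.sum_const, smul_eq_mul]
        _ = (p - 1) * A₁.card ^ 2 := by
            rw [hT]
            rw [Finset.filter_product (fun s : ZMod p × ZMod p => s.1 = s.2)
              (fun s : ZMod p × ZMod p => s.1 = s.2)]
            rw [Finset.card_product, _root_.diag_card]
            ring
    have hb2 : ∑ t ∈ T.filter (fun t => ¬(t.1.1 = t.1.2 ∧ t.2.1 = t.2.2)),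
        (R.filter (fun ξ => t.1.1 + ξ * t.2.1 = t.1.2 + ξ * t.2.2)).card
        ≤ A₁.card ^ 4 := by
      calc ∑ t ∈ T.filter (fun t => ¬(t.1.1 = t.1.2 ∧ t.2.1 = t.2.2)),
            (R.filter (fun ξ => t.1.1 + ξ * t.2.1 = t.1.2 + ξ * t.2.2)).card
          ≤ ∑ _t ∈ T.filter (fun t => ¬(t.1.1 = t.1.2 ∧ t.2.1 = t.2.2)), 1 := by
            apply Finset.sum_le_sum
            intro t ht
            simp only [Finset.mem_filter] at ht
            apply Finset.card_le_one.mpr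
            intro ξ hξ ξ' hξ'
            simp only [Finset.mem_filter] at hξ hξ'
            by_cases hcd : t.2.1 = t.2.2
            · exfalso
              apply ht.2
              refine ⟨?_, hcd⟩
              have := hξ.2
              rw [hcd] at this
              exact add_right_cancel this
            · have hz : (ξ - ξ') * (t.2.1 - t.2.2) = 0 := by
                linear_combination hξ.2 - hξ'.2
              rcases mul_eq_zero.mp hz with h | h
              · exact sub_eq_zero.mp h
              · exact absurd (sub_eq_zero.mp h) hcd
        _ ≤ T.card := by
            rw [Finset.sum_const, smul_eq_mul, mul_one]
            exact Finset.card_filter_le _ _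
        _ = A₁.card ^ 4 := by
            rw [hT, Finset.card_product, Finset.card_product]
            ring
    omega
  obtain ⟨ξ, hξR, hmin⟩ := R.exists_min_image
    (fun ξ => paperAddEnergy A₁ (A₁.image (ξ * ·))) hRne
  refine ⟨ξ, Finset.ne_of_mem_erase hξR, ?_⟩
  have hsum : R.card * paperAddEnergy A₁ (A₁.image (ξ * ·))
      ≤ ∑ ξ' ∈ R, paperAddEnergy A₁ (A₁.image (ξ' * ·)) := by
    have := Finset.card_nsmul_le_sum R
      (fun ξ' => paperAddEnergy A₁ (A₁.image (ξ' * ·)))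
      (paperAddEnergy A₁ (A₁.image (ξ * ·))) (fun ξ' h => hmin ξ' h)
    simpa using this
  have hnat : (p - 1) * paperAddEnergy A₁ (A₁.image (ξ * ·))
      ≤ (p - 1) * A₁.card ^ 2 + A₁.card ^ 4 := by
    rw [hRcard] at hsum
    exact le_trans hsum key
  have hp1 : (1 : ℝ) < p := by exact_mod_cast hp.one_lt
  have h0 : (0 : ℝ) < (p : ℝ) - 1 := by linarith
  have hcast : ((p : ℝ) - 1) * (paperAddEnergy A₁ (A₁.image (ξ * ·)) : ℝ)
      ≤ ((p : ℝ) - 1) * (A₁.card : ℝ) ^ 2 + (A₁.card : ℝ) ^ 4 := by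
    have := hnat
    have h1p : 1 ≤ p := hp.one_lt.le
    exact_mod_cast (by push_cast [Nat.cast_sub h1p] at this ⊢; exact_mod_cast this :
      ((p : ℝ) - 1) * (paperAddEnergy A₁ (A₁.image (ξ * ·)) : ℝ)
        ≤ ((p : ℝ) - 1) * (A₁.card : ℝ) ^ 2 + (A₁.card : ℝ) ^ 4)
  rw [← sub_le_iff_le_add', le_div_iff₀ h0] at *
  nlinarith [hcast]
end
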